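/- Exact second-round losses in the Eisenberg-Noe model: H^{EN}(∞) − H^{EN}(1) = (1/Σ_i E_i(0)) · [Σ_{i ∈ D(1)} (A^e_i s_i − E_i(0)) − Σ_i (1 − β_i)(p̄_i − p_i(∞))], where D(1) = {i : s_i > 1/l^e_i} is the set of banks defaulted at the first round and l^e_i = A^e_i/E_i(0) is the external leverage. -/

import Mathlib

/-- Exact second-round losses in the Eisenberg-Noe model:
H^EN(∞) − H^EN(1) = (1/Σ E(0)) [Σ_{i∈D(1)} (A^e_i s_i − E_i(0))
  − Σ_i (1 − β_i)(p̄_i − p_i(∞))], where D(1) = {i : s_i > 1/l^e_i}. -/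
theorem en_second_round_losses
    (n : ℕ) (Ae s pbar E0 pinf β le : Fin n → ℝ)
    (hE0pos : ∀ i, 0 < E0 i) (hAe : ∀ i, 0 < Ae i)
    (hle : ∀ i, le i = Ae i / E0 i)
    (hs : ∀ i, s i ∈ Set.Icc (0:ℝ) 1)
    (hβ : ∀ i, β i ∈ Set.Icc (0:ℝ) 1)
    (H1 Hinf : ℝ)
    (hH1 : H1 = (1 / ∑ i, E0 i) * ∑ i, E0 i * min 1 (le i * s i))
    (hHinf : Hinf =
      (1 / ∑ i, E0 i) * ∑ i, (Ae i * s i - (1 - β i) * (pbar i - pinf i))) :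
    Hinf - H1 = (1 / ∑ i, E0 i) *
      ((∑ i ∈ Finset.univ.filter (fun i => 1 / le i < s i), (Ae i * s i - E0 i)) -
        ∑ i, (1 - β i) * (pbar i - pinf i)) := by
  have key : ∀ i, Ae i * s i - E0 i * min 1 (le i * s i) =
      if 1 / le i < s i then Ae i * s i - E0 i else 0 := by
    intro i
    have hE := hE0pos i
    have hA := hAe i
    have hlepos : 0 < le i := by rw [hle i]; positivity
    have h1 : 1 / le i = E0 i / Ae i := by
      rw [hle i, one_div_div]
    by_cases h : 1 / le i < s i
    · have hlt : E0 i < Ae i * s i := by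
        rw [h1, div_lt_iff₀ hA] at h; linarith [h]
      have hmin : min 1 (le i * s i) = 1 := by
        apply min_eq_left
        rw [hle i, div_mul_eq_mul_div, le_div_iff₀ hE]
        linarith
      rw [hmin]; rw [if_pos h]; ring
    · have hle' : s i ≤ 1 / le i := le_of_not_gt h
      have hge : Ae i * s i ≤ E0 i := by
        rw [h1, le_div_iff₀ hA] at hle'
        linarith [hle']
      have hmin : min 1 (le i * s i) = le i * s i := by
        apply min_eq_right
        rw [hle i, div_mul_eq_mul_div, div_le_one hE]
        linarith
      have : E0 i * (le i * s i) = Ae i * s i := by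
        rw [hle i]; field_simp
      rw [hmin, ← mul_assoc] at *
      rw [if_neg h]
      rw [hle i] at *; field_simp; ring
  have hsum : (∑ i, Ae i * s i) - (∑ i, E0 i * min 1 (le i * s i)) =
      ∑ i ∈ Finset.univ.filter (fun i => 1 / le i < s i), (Ae i * s i - E0 i) := by
    rw [← Finset.sum_sub_distrib]
    rw [Finset.sum_filter]
    exact Finset.sum_congr rfl fun i _ => key i
  rw [hH1, hHinf, ← mul_sub, Finset.sum_sub_distrib]
  congr 1
  linarith [hsum]
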